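/- The function (p,B) ↦ p·d / (B·log₂(1 + p·h/(N₀·B))) is pseudoconvex on the domain p > 0, B > 0, for fixed constants d > 0, h > 0, N₀ > 0. (A function f is pseudoconvex if it is differentiable and whenever ∇f(x)·(y−x) ≥ 0 then f(y) ≥ f(x).) -/

import Mathlib

open Real Set

/-- auxiliary: the rate function -/
private noncomputable def gfun (h N₀ : ℝ) : ℝ × ℝ → ℝ := fun x => x.2 * Real.logb 2 (1 + x.1 * h / (N₀ * x.2))

private lemma arg_gt_one {h N₀ : ℝ} (hh : 0 < h) (hN₀ : 0 < N₀) {x : ℝ × ℝ} (hx1 : 0 < x.1) (hx2 : 0 < x.2) :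
    1 < 1 + x.1 * h / (N₀ * x.2) := by
  have : 0 < x.1 * h / (N₀ * x.2) := div_pos (mul_pos hx1 hh) (mul_pos hN₀ hx2)
  linarith

private lemma gfun_pos {h N₀ : ℝ} (hh : 0 < h) (hN₀ : 0 < N₀) {x : ℝ × ℝ} (hx1 : 0 < x.1) (hx2 : 0 < x.2) :
    0 < gfun h N₀ x :=
  mul_pos hx2 (Real.logb_pos one_lt_two (arg_gt_one hh hN₀ hx1 hx2))

private lemma gfun_diff {h N₀ : ℝ} (hh : 0 < h) (hN₀ : 0 < N₀) {x : ℝ × ℝ} (hx1 : 0 < x.1) (hx2 : 0 < x.2) :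
    DifferentiableAt ℝ (gfun h N₀) x := by
  have harg : (0:ℝ) < 1 + x.1 * h / (N₀ * x.2) :=
    lt_trans one_pos (arg_gt_one hh hN₀ hx1 hx2)
  have hden : (N₀ * x.2) ≠ 0 := ne_of_gt (mul_pos hN₀ hx2)
  have hinner : DifferentiableAt ℝ (fun z : ℝ × ℝ => 1 + z.1 * h / (N₀ * z.2)) x := by
    apply DifferentiableAt.const_add
    simp only [div_eq_mul_inv]
    exact (differentiableAt_fst.mul_const h).mul
      (((differentiableAt_snd.const_mul N₀).inv hden))
  have hlog : DifferentiableAt ℝ (fun z : ℝ × ℝ => Real.logb 2 (1 + z.1 * h / (N₀ * z.2))) x := by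
    simp only [Real.logb, div_eq_mul_inv]
    exact (hinner.log (ne_of_gt harg)).mul_const (Real.log 2)⁻¹
  exact differentiableAt_snd.mul hlog

private lemma gfun_concave {h N₀ : ℝ} (hh : 0 < h) (hN₀ : 0 < N₀) :
    ConcaveOn ℝ ((Set.Ioi (0:ℝ)) ×ˢ (Set.Ioi (0:ℝ))) (gfun h N₀) := by
  refine ⟨(convex_Ioi 0).prod (convex_Ioi 0), ?_⟩
  rintro x ⟨hx1, hx2⟩ y ⟨hy1, hy2⟩ α β hα hβ hαβ
  simp only [mem_Ioi] at hx1 hx2 hy1 hy2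
  have hB : 0 < α * x.2 + β * y.2 := by
    rcases hα.lt_or_eq with hα' | hα'
    · have h1 : 0 < α * x.2 := mul_pos hα' hx2
      have h2 : 0 ≤ β * y.2 := mul_nonneg hβ hy2.le
      linarith
    · have hβ1 : β = 1 := by linarith
      rw [← hα', hβ1]; simpa using hy2
  set s : ℝ := 1 + x.1 * h / (N₀ * x.2) with hs_def
  set t : ℝ := 1 + y.1 * h / (N₀ * y.2) with ht_def
  have hs : 0 < s := lt_trans one_pos (arg_gt_one hh hN₀ hx1 hx2)
  have ht : 0 < t := lt_trans one_pos (arg_gt_one hh hN₀ hy1 hy2)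
  set lam : ℝ := α * x.2 / (α * x.2 + β * y.2) with hlam_def
  set mu : ℝ := β * y.2 / (α * x.2 + β * y.2) with hmu_def
  have hlam : 0 ≤ lam := div_nonneg (mul_nonneg hα hx2.le) hB.le
  have hmu : 0 ≤ mu := div_nonneg (mul_nonneg hβ hy2.le) hB.le
  have hlammu : lam + mu = 1 := by
    rw [hlam_def, hmu_def, ← add_div, div_self hB.ne']
  have hlog := strictConcaveOn_log_Ioi.concaveOn.2 (mem_Ioi.2 hs) (mem_Ioi.2 ht)
    hlam hmu hlammu
  simp only [smul_eq_mul] at hlog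
  have hx2' : (N₀ * x.2) ≠ 0 := ne_of_gt (mul_pos hN₀ hx2)
  have hy2' : (N₀ * y.2) ≠ 0 := ne_of_gt (mul_pos hN₀ hy2)
  have key : 1 + (α * x.1 + β * y.1) * h / (N₀ * (α * x.2 + β * y.2)) = lam * s + mu * t := by
    simp only [hlam_def, hmu_def, hs_def, ht_def]
    field_simp
    ring
  have hL : (0:ℝ) < Real.log 2 := Real.log_pos one_lt_two
  simp only [gfun, smul_eq_mul, Prod.fst_add, Prod.snd_add, Prod.smul_fst, Prod.smul_snd,
    Real.logb]
  rw [key]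
  have step : (α * x.2 + β * y.2) * (lam * Real.log s + mu * Real.log t)
      = α * x.2 * Real.log s + β * y.2 * Real.log t := by
    rw [hlam_def, hmu_def]; field_simp
  calc α * (x.2 * (Real.log s / Real.log 2)) + β * (y.2 * (Real.log t / Real.log 2))
      = ((α * x.2 + β * y.2) * (lam * Real.log s + mu * Real.log t)) / Real.log 2 := by
        rw [step]; ring
    _ ≤ ((α * x.2 + β * y.2) * Real.log (lam * s + mu * t)) / Real.log 2 := by
        gcongr
    _ = (α * x.2 + β * y.2) * (Real.log (lam * s + mu * t) / Real.log 2) := by ring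

private lemma seg_mem {x y : ℝ × ℝ} (hx1 : 0 < x.1) (hx2 : 0 < x.2) (hy1 : 0 < y.1)
    (hy2 : 0 < y.2) {t : ℝ} (ht : t ∈ Icc (0:ℝ) 1) :
    (x + t • (y - x)) ∈ (Set.Ioi (0:ℝ)) ×ˢ (Set.Ioi (0:ℝ)) := by
  obtain ⟨ht0, ht1⟩ := ht
  constructor
  · simp only [Prod.fst_add, Prod.smul_fst, Prod.fst_sub, smul_eq_mul, mem_Ioi]
    nlinarith [lt_min hx1 hy1,
      mul_nonneg (sub_nonneg.2 ht1) (sub_nonneg.2 (min_le_left x.1 y.1)),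
      mul_nonneg ht0 (sub_nonneg.2 (min_le_right x.1 y.1))]
  · simp only [Prod.snd_add, Prod.smul_snd, Prod.snd_sub, smul_eq_mul, mem_Ioi]
    nlinarith [lt_min hx2 hy2,
      mul_nonneg (sub_nonneg.2 ht1) (sub_nonneg.2 (min_le_left x.2 y.2)),
      mul_nonneg ht0 (sub_nonneg.2 (min_le_right x.2 y.2))]

private lemma psi_concave {h N₀ : ℝ} (hh : 0 < h) (hN₀ : 0 < N₀) {x y : ℝ × ℝ} (hx1 : 0 < x.1)
    (hx2 : 0 < x.2) (hy1 : 0 < y.1) (hy2 : 0 < y.2) :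
    ConcaveOn ℝ (Icc (0:ℝ) 1) (fun t => gfun h N₀ (x + t • (y - x))) := by
  refine ⟨convex_Icc 0 1, ?_⟩
  intro a ha b hb α β hα hβ hαβ
  have hpt : α • (x + a • (y - x)) + β • (x + b • (y - x))
      = x + (α * a + β * b) • (y - x) := by
    have : α • x + β • x = x := by rw [← add_smul, hαβ, one_smul]
    rw [smul_add, smul_add, smul_smul, smul_smul, add_add_add_comm, this, ← add_smul]
  have hineq := (gfun_concave hh hN₀).2 (seg_mem hx1 hx2 hy1 hy2 ha)
    (seg_mem hx1 hx2 hy1 hy2 hb) hα hβ hαβ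
  rw [hpt] at hineq
  simpa [smul_eq_mul] using hineq


/-- The transmission-energy ratio `(p,B) ↦ p·d / (B·log₂(1 + p·h/(N₀·B)))` is pseudoconvex
on `p > 0, B > 0`: it is differentiable there, and whenever the directional derivative
`∇f(x)·(y−x)` is nonnegative one has `f(y) ≥ f(x)`. -/
theorem energy_ratio_pseudoconvex (d h N₀ : ℝ) (hd : 0 < d) (hh : 0 < h) (hN₀ : 0 < N₀) :
    (∀ x : ℝ × ℝ, 0 < x.1 → 0 < x.2 →
      DifferentiableAt ℝ
        (fun x : ℝ × ℝ => x.1 * d / (x.2 * Real.logb 2 (1 + x.1 * h / (N₀ * x.2)))) x) ∧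
    (∀ x y : ℝ × ℝ, 0 < x.1 → 0 < x.2 → 0 < y.1 → 0 < y.2 →
      0 ≤ fderiv ℝ
        (fun x : ℝ × ℝ => x.1 * d / (x.2 * Real.logb 2 (1 + x.1 * h / (N₀ * x.2)))) x (y - x) →
      x.1 * d / (x.2 * Real.logb 2 (1 + x.1 * h / (N₀ * x.2))) ≤
        y.1 * d / (y.2 * Real.logb 2 (1 + y.1 * h / (N₀ * y.2)))) := by
  have hfeq : (fun x : ℝ × ℝ => x.1 * d / (x.2 * Real.logb 2 (1 + x.1 * h / (N₀ * x.2))))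
      = fun z : ℝ × ℝ => z.1 * d / gfun h N₀ z := rfl
  have hdiff : ∀ x : ℝ × ℝ, 0 < x.1 → 0 < x.2 →
      DifferentiableAt ℝ (fun z : ℝ × ℝ => z.1 * d / gfun h N₀ z) x := by
    intro x hx1 hx2
    have hgx := gfun_pos hh hN₀ hx1 hx2
    have hu : DifferentiableAt ℝ (fun z : ℝ × ℝ => z.1 * d) x := differentiableAt_fst.mul_const d
    have hg := gfun_diff hh hN₀ hx1 hx2
    simp only [div_eq_mul_inv]
    exact hu.mul (hg.inv hgx.ne')
  constructor
  · intro x hx1 hx2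
    rw [hfeq]
    exact hdiff x hx1 hx2
  · intro x y hx1 hx2 hy1 hy2 h0
    rw [hfeq] at h0
    have hgx := gfun_pos hh hN₀ hx1 hx2
    have hgy := gfun_pos hh hN₀ hy1 hy2
    have hgd := gfun_diff hh hN₀ hx1 hx2
    set v : ℝ × ℝ := y - x with hv
    have hline : HasDerivAt (fun t : ℝ => x + t • v) v 0 := by
      simpa using ((hasDerivAt_id (0:ℝ)).smul_const v).const_add x
    set G := fderiv ℝ (gfun h N₀) x with hGdef
    have hGd : HasFDerivAt (gfun h N₀) G x := hgd.hasFDerivAt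
    have hψ : HasDerivAt (fun t : ℝ => gfun h N₀ (x + t • v)) (G v) 0 := by
      have hGd' : HasFDerivAt (gfun h N₀) G ((fun t : ℝ => x + t • v) 0) := by simpa using hGd
      simpa [Function.comp_def] using hGd'.comp_hasDerivAt 0 hline
    have hnum : HasDerivAt (fun t : ℝ => (x + t • v).1 * d) (v.1 * d) 0 := by
      have h1 : HasDerivAt (fun t : ℝ => x.1 + t * v.1) v.1 0 := by
        simpa using ((hasDerivAt_id (0:ℝ)).mul_const v.1).const_add x.1
      have h2 := h1.mul_const d
      simpa [Prod.fst_add, Prod.smul_fst, smul_eq_mul] using h2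
    have hφ2 : HasDerivAt (fun t : ℝ => (x + t • v).1 * d / gfun h N₀ (x + t • v))
        ((v.1 * d * gfun h N₀ x - x.1 * d * G v) / gfun h N₀ x ^ 2) 0 := by
      have hψ0 : gfun h N₀ ((fun t : ℝ => x + t • v) 0) = gfun h N₀ x := by norm_num
      have hd2 := hnum.div hψ (by rw [show (x + (0:ℝ) • v) = x by norm_num]; exact hgx.ne')
      simpa [Pi.div_def] using hd2
    have hφ1 : HasDerivAt (fun t : ℝ => (x + t • v).1 * d / gfun h N₀ (x + t • v))
        (fderiv ℝ (fun z : ℝ × ℝ => z.1 * d / gfun h N₀ z) x v) 0 := by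
      have hF := (hdiff x hx1 hx2).hasFDerivAt
      have hF' : HasFDerivAt (fun z : ℝ × ℝ => z.1 * d / gfun h N₀ z)
          (fderiv ℝ (fun z : ℝ × ℝ => z.1 * d / gfun h N₀ z) x)
          ((fun t : ℝ => x + t • v) 0) := by simpa using hF
      simpa [Function.comp_def] using hF'.comp_hasDerivAt 0 hline
    have hder : fderiv ℝ (fun z : ℝ × ℝ => z.1 * d / gfun h N₀ z) x v
        = (v.1 * d * gfun h N₀ x - x.1 * d * G v) / gfun h N₀ x ^ 2 := hφ1.unique hφ2
    have h0' : 0 ≤ (v.1 * d * gfun h N₀ x - x.1 * d * G v) / gfun h N₀ x ^ 2 := by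
      rw [← hder]; exact h0
    have hsq : (0:ℝ) < gfun h N₀ x ^ 2 := by positivity
    have key1 : 0 ≤ v.1 * d * gfun h N₀ x - x.1 * d * G v := by
      have hm := mul_nonneg h0' hsq.le
      rwa [div_mul_cancel₀ _ hsq.ne'] at hm
    -- concavity: gfun y - gfun x ≤ G v
    have hconc := psi_concave hh hN₀ hx1 hx2 hy1 hy2 (x := x) (y := y)
    have hslope := hconc.slope_le_of_hasDerivAt (left_mem_Icc.2 zero_le_one)
      (right_mem_Icc.2 zero_le_one) zero_lt_one hψ
    have he1 : x + (1:ℝ) • v = y := by rw [one_smul, hv]; abel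
    have hcomp : gfun h N₀ y - gfun h N₀ x ≤ G v := by
      have := hslope
      rw [slope_def_field] at this
      simpa [he1] using this
    have hv1 : v.1 = y.1 - x.1 := rfl
    show x.1 * d / gfun h N₀ x ≤ y.1 * d / gfun h N₀ y
    rw [div_le_div_iff₀ hgx hgy]
    have hmul := mul_le_mul_of_nonneg_left hcomp (by positivity : (0:ℝ) ≤ x.1 * d)
    rw [hv1] at key1
    nlinarith [key1, hmul]
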